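/- arXiv:2312.16291 — 4 statements merged into one kernel-verified Lean document; each statement's English description precedes it below -/
import Mathlib

section
/- Let d ≥ 2, let y1, y2 ∈ ℝ^d with y1 ≠ 0, let s > 0 and k ∈ ℝ, and let S = {x ∈ ℝ^d : ‖x‖ = s and ⟪x, y1⟫ = k}. Let μ be a probability measure on ℝ^d whose support is contained in S and which is invariant under every linear isometry T of ℝ^d satisfying T y1 = y1 (the uniform distribution on S has this property). Then ∫ ⟪x, y2⟫ dμ(x) = k · ⟪y1, y2⟫ / ‖y1‖². -/
open MeasureTheory
open scoped RealInnerProductSpace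

/-- **Expectation part of Theorem 2 (coupling coefficients).**
For a probability measure supported on the hypersphere
`{x : ‖x‖ = s, ⟪x, y1⟫ = k}` that is invariant under every linear isometry
fixing `y1`, the expected value of `⟪x, y2⟫` equals `k * ⟪y1, y2⟫ / ‖y1‖²`. -/
theorem coupling_coefficient_expectation {d : ℕ} (hd : 2 ≤ d)
    (y1 y2 : EuclideanSpace ℝ (Fin d)) (hy1 : y1 ≠ 0)
    (s : ℝ) (hs : 0 < s) (k : ℝ)
    (μ : Measure (EuclideanSpace ℝ (Fin d))) [IsProbabilityMeasure μ]
    (hsupp : ∀ᵐ x ∂μ, ‖x‖ = s ∧ ⟪x, y1⟫ = k)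
    (hinv : ∀ T : EuclideanSpace ℝ (Fin d) ≃ₗᵢ[ℝ] EuclideanSpace ℝ (Fin d),
      T y1 = y1 → Measure.map T μ = μ) :
    ∫ x, ⟪x, y2⟫ ∂μ = k * ⟪y1, y2⟫ / ‖y1‖ ^ 2 := by
  set c : ℝ := ⟪y1, y2⟫ / ‖y1‖ ^ 2 with hc
  set w : EuclideanSpace ℝ (Fin d) := y2 - c • y1 with hw
  have hny1 : ‖y1‖ ^ 2 ≠ 0 := by
    simpa using (norm_ne_zero_iff.mpr hy1)
  have hwy1 : ⟪y1, w⟫ = 0 := by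
    simp only [hw, inner_sub_right, real_inner_smul_right, hc]
    rw [real_inner_self_eq_norm_sq]
    field_simp
    ring
  -- integrability of inner products
  have hint : ∀ v : EuclideanSpace ℝ (Fin d), Integrable (fun x => ⟪x, v⟫) μ := by
    intro v
    refine Integrable.mono' (integrable_const (s * ‖v‖))
      (Continuous.aestronglyMeasurable ?_) ?_
    · exact continuous_id.inner continuous_const
    · filter_upwards [hsupp] with x hx
      calc ‖⟪x, v⟫‖ ≤ ‖x‖ * ‖v‖ := by
            simpa using abs_real_inner_le_norm x v
        _ = s * ‖v‖ := by rw [hx.1]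
  -- reflection across the hyperplane orthogonal to w
  have hwint : ∫ x, ⟪x, w⟫ ∂μ = 0 := by
    set T := Submodule.reflection (ℝ ∙ w)ᗮ with hT
    have hTy1 : T y1 = y1 := by
      apply Submodule.reflection_mem_subspace_eq_self
      rw [Submodule.mem_orthogonal_singleton_iff_inner_right, real_inner_comm]
      exact hwy1
    have hTw : T w = -w := Submodule.reflection_orthogonalComplement_singleton_eq_neg w
    have hmap := hinv T hTy1
    have hme : MeasurableEmbedding (⇑T) := T.toHomeomorph.measurableEmbedding
    have h1 : ∫ x, ⟪x, w⟫ ∂μ = ∫ x, ⟪T x, w⟫ ∂μ := by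
      conv_lhs => rw [← hmap]
      rw [hme.integral_map]
    have h2 : ∀ x, ⟪T x, w⟫ = -⟪x, w⟫ := by
      intro x
      have : ⟪T x, T (T.symm w)⟫ = ⟪x, T.symm w⟫ := T.inner_map_map x _
      rw [T.apply_symm_apply] at this
      rw [this]
      have hsymm : T.symm w = -w := by
        show (Submodule.reflection (ℝ ∙ w)ᗮ).symm w = -w
        rw [Submodule.reflection_symm]
        exact hTw
      rw [hsymm, inner_neg_right]
    have h3 : ∫ x, ⟪T x, w⟫ ∂μ = - ∫ x, ⟪x, w⟫ ∂μ := by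
      simp only [h2]
      exact integral_neg _
    linarith
  have hy2 : y2 = c • y1 + w := by simp [hw]
  have key : ∀ x, ⟪x, y2⟫ = c * ⟪x, y1⟫ + ⟪x, w⟫ := by
    intro x
    rw [hy2, inner_add_right, real_inner_smul_right]
  calc ∫ x, ⟪x, y2⟫ ∂μ = ∫ x, (c * ⟪x, y1⟫ + ⟪x, w⟫) ∂μ := by
        simp only [key]
    _ = c * ∫ x, ⟪x, y1⟫ ∂μ + ∫ x, ⟪x, w⟫ ∂μ := by
        rw [integral_add ((hint y1).const_mul c) (hint w), integral_const_mul]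
    _ = c * k := by
        rw [hwint, add_zero]
        congr 1
        rw [show k = ∫ _x, k ∂μ by simp]
        exact integral_congr_ae (by filter_upwards [hsupp] with x hx using hx.2)
    _ = k * ⟪y1, y2⟫ / ‖y1‖ ^ 2 := by rw [hc]; ring
end

section
/- Let d ≥ 2, let y1, y2 ∈ ℝ^d be nonzero, let s > 0 and k ∈ ℝ with |k| ≤ s·‖y1‖. Set cosθ = ⟪y1, y2⟫/(‖y1‖·‖y2‖) and sinθ = √(1 − cos²θ). Then the function x ↦ ⟪x, y2⟫ restricted to the set S = {x ∈ ℝ^d : ‖x‖ = s and ⟪x, y1⟫ = k} attains a maximum value equal to (‖y2‖/‖y1‖)·(k·cosθ + sinθ·√(s²‖y1‖² − k²)) and a minimum value equal to (‖y2‖/‖y1‖)·(k·cosθ − sinθ·√(s²‖y1‖² − k²)). -/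
open scoped RealInnerProductSpace

/-- In dimension ≥ 2, every unit vector has a unit vector orthogonal to it. -/
lemma exists_unit_orthogonal {d : ℕ} (hd : 2 ≤ d) (u : EuclideanSpace ℝ (Fin d))
    (hu : ‖u‖ = 1) : ∃ v : EuclideanSpace ℝ (Fin d), ‖v‖ = 1 ∧ ⟪u, v⟫ = 0 := by
  have hu0 : u ≠ 0 := by intro h; rw [h, norm_zero] at hu; norm_num at hu
  have huu : ⟪u, u⟫ = 1 := by
    rw [real_inner_self_eq_norm_sq, hu]; norm_num
  obtain ⟨v, hv⟩ : ∃ v, v ∉ (ℝ ∙ u) := by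
    by_contra h
    push_neg at h
    have htop : (ℝ ∙ u) = ⊤ := Submodule.eq_top_iff'.mpr h
    have h1 : Module.finrank ℝ (ℝ ∙ u : Submodule ℝ (EuclideanSpace ℝ (Fin d))) = 1 :=
      finrank_span_singleton hu0
    rw [htop, finrank_top, finrank_euclideanSpace_fin] at h1
    omega
  set p : EuclideanSpace ℝ (Fin d) := v - ⟪u, v⟫ • u with hpdef
  clear_value p
  have hup : ⟪u, p⟫ = 0 := by
    rw [hpdef, inner_sub_right, real_inner_smul_right, huu]; ring
  have hp0 : p ≠ 0 := by
    intro h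
    apply hv
    have hv' : v = ⟪u, v⟫ • u := by
      have h2 : v - ⟪u, v⟫ • u = 0 := by rw [← hpdef, h]
      have := sub_eq_zero.mp h2
      exact this
    rw [hv']
    exact Submodule.smul_mem _ _ (Submodule.mem_span_singleton_self u)
  have hpn : (0:ℝ) < ‖p‖ := norm_pos_iff.mpr hp0
  refine ⟨‖p‖⁻¹ • p, ?_, ?_⟩
  · rw [norm_smul, norm_inv, norm_norm, inv_mul_cancel₀ hpn.ne']
  · rw [real_inner_smul_right, hup, mul_zero]

/-- **Extremal part of Theorem 2.** The maximum and minimum of `⟪x, y2⟫` subject to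
`‖x‖ = s` and `⟪x, y1⟫ = k` are `(‖y2‖/‖y1‖) (k cos θ ± sin θ √(s²‖y1‖² − k²))`,
where `θ` is the angle between `y1` and `y2`. -/
theorem coupling_extremal_values {d : ℕ} (hd : 2 ≤ d)
    (y1 y2 : EuclideanSpace ℝ (Fin d)) (hy1 : y1 ≠ 0) (hy2 : y2 ≠ 0)
    (s k : ℝ) (hs : 0 < s) (hk : |k| ≤ s * ‖y1‖)
    (S : Set (EuclideanSpace ℝ (Fin d)))
    (hS : S = {x | ‖x‖ = s ∧ ⟪x, y1⟫ = k})
    (cosθ sinθ : ℝ)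
    (hcos : cosθ = ⟪y1, y2⟫ / (‖y1‖ * ‖y2‖))
    (hsin : sinθ = Real.sqrt (1 - cosθ ^ 2)) :
    (∃ x ∈ S, ⟪x, y2⟫ = ‖y2‖ / ‖y1‖ *
        (k * cosθ + sinθ * Real.sqrt (s ^ 2 * ‖y1‖ ^ 2 - k ^ 2)) ∧
      ∀ z ∈ S, ⟪z, y2⟫ ≤ ⟪x, y2⟫) ∧
    (∃ x ∈ S, ⟪x, y2⟫ = ‖y2‖ / ‖y1‖ *
        (k * cosθ - sinθ * Real.sqrt (s ^ 2 * ‖y1‖ ^ 2 - k ^ 2)) ∧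
      ∀ z ∈ S, ⟪x, y2⟫ ≤ ⟪z, y2⟫) := by
  have hn1 : (0:ℝ) < ‖y1‖ := norm_pos_iff.mpr hy1
  have hn2 : (0:ℝ) < ‖y2‖ := norm_pos_iff.mpr hy2
  set n1 : ℝ := ‖y1‖ with hn1def
  clear_value n1
  set u : EuclideanSpace ℝ (Fin d) := n1⁻¹ • y1 with hudef
  clear_value u
  have hu1 : ‖u‖ = 1 := by
    rw [hudef, norm_smul, norm_inv, Real.norm_eq_abs, abs_of_pos hn1,
      ← hn1def, inv_mul_cancel₀ hn1.ne']
  have huu : ⟪u, u⟫ = 1 := by rw [real_inner_self_eq_norm_sq, hu1]; norm_num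
  have hy1u : y1 = n1 • u := by
    rw [hudef, smul_smul, mul_inv_cancel₀ hn1.ne', one_smul]
  have huy1 : ⟪u, y1⟫ = n1 := by
    conv_lhs => rw [hy1u]
    rw [real_inner_smul_right, huu, mul_one]
  have hcs : |cosθ| ≤ 1 := by
    rw [hcos, abs_div, abs_of_pos (mul_pos hn1 hn2)]
    rw [div_le_one (mul_pos hn1 hn2)]
    rw [hn1def]
    exact abs_real_inner_le_norm y1 y2
  have hcs2 : (0:ℝ) ≤ 1 - cosθ ^ 2 := by
    have := abs_le.mp hcs
    nlinarith
  have hsin0 : 0 ≤ sinθ := hsin ▸ Real.sqrt_nonneg _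
  have hsinsq : sinθ ^ 2 = 1 - cosθ ^ 2 := by rw [hsin, Real.sq_sqrt hcs2]
  set a : ℝ := ⟪u, y2⟫ with hadef
  clear_value a
  have ha : a = ‖y2‖ * cosθ := by
    rw [hadef, hudef, real_inner_smul_left, hcos]
    field_simp
  set w : EuclideanSpace ℝ (Fin d) := y2 - a • u with hwdef
  clear_value w
  have hy2w : y2 = a • u + w := by rw [hwdef]; module
  have huw : ⟪u, w⟫ = 0 := by
    rw [hwdef, inner_sub_right, real_inner_smul_right, huu, ← hadef]; ring
  have hwsq : ‖w‖ ^ 2 = ‖y2‖ ^ 2 - a ^ 2 := by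
    have hy2u : ⟪y2, u⟫ = a := by rw [real_inner_comm]; exact hadef.symm
    have h := norm_sub_sq_real y2 (a • u)
    rw [real_inner_smul_right, hy2u, norm_smul, hu1,
      mul_one, Real.norm_eq_abs, sq_abs] at h
    rw [hwdef, h]; ring
  have hw : ‖w‖ = ‖y2‖ * sinθ := by
    have h2 : ‖w‖ = Real.sqrt ((‖y2‖ * sinθ) ^ 2) := by
      rw [show (‖y2‖ * sinθ) ^ 2 = ‖w‖ ^ 2 by rw [hwsq, ha, mul_pow, hsinsq]; ring,
        Real.sqrt_sq (norm_nonneg w)]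
    rw [h2, Real.sqrt_sq (mul_nonneg hn2.le hsin0)]
  have hksq : k ^ 2 ≤ s ^ 2 * n1 ^ 2 := by
    have h := mul_self_le_mul_self (abs_nonneg k) hk
    rw [← sq_abs k]
    nlinarith
  set D : ℝ := Real.sqrt (s ^ 2 * n1 ^ 2 - k ^ 2) with hDdef
  have hD0 : 0 ≤ D := hDdef ▸ Real.sqrt_nonneg _
  have hDsq : D ^ 2 = s ^ 2 * n1 ^ 2 - k ^ 2 := by
    rw [hDdef, Real.sq_sqrt (by linarith)]
  clear_value D
  set r : ℝ := D / n1 with hrdef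
  clear_value r
  have hr0 : 0 ≤ r := hrdef ▸ div_nonneg hD0 hn1.le
  have hrsq : r ^ 2 = s ^ 2 - k ^ 2 / n1 ^ 2 := by
    rw [hrdef, div_pow, hDsq]
    field_simp
  obtain ⟨v0, hv01, hv0u, hv0w⟩ :
      ∃ v0 : EuclideanSpace ℝ (Fin d), ‖v0‖ = 1 ∧ ⟪u, v0⟫ = 0 ∧ ⟪v0, w⟫ = ‖w‖ := by
    by_cases hw0 : w = 0
    · obtain ⟨v, hv1, hvu⟩ := exists_unit_orthogonal hd u hu1
      exact ⟨v, hv1, hvu, by simp [hw0]⟩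
    · have hwn : (0:ℝ) < ‖w‖ := norm_pos_iff.mpr hw0
      refine ⟨‖w‖⁻¹ • w, ?_, ?_, ?_⟩
      · rw [norm_smul, norm_inv, norm_norm, inv_mul_cancel₀ hwn.ne']
      · rw [real_inner_smul_right, huw, mul_zero]
      · rw [real_inner_smul_left, real_inner_self_eq_norm_sq, sq, ← mul_assoc,
          inv_mul_cancel₀ hwn.ne', one_mul]
  have hv0u' : ⟪v0, u⟫ = 0 := by rw [real_inner_comm]; exact hv0u
  have hv0y1 : ⟪v0, y1⟫ = 0 := by
    rw [hy1u, real_inner_smul_right, hv0u', mul_zero]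
  have hv0y2 : ⟪v0, y2⟫ = ‖w‖ := by
    rw [hy2w, inner_add_right, real_inner_smul_right, hv0u', hv0w]; ring
  have huy2 : ⟪u, y2⟫ = a := hadef.symm
  -- membership
  have hmem : ∀ c : ℝ, c ^ 2 = r ^ 2 → ((k / n1) • u + c • v0) ∈ S := by
    intro c hc
    rw [hS]
    have hinner : ⟪(k / n1) • u, c • v0⟫ = 0 := by
      rw [real_inner_smul_left, real_inner_smul_right, hv0u]; ring
    have hnormsq : ‖(k / n1) • u + c • v0‖ ^ 2 = s ^ 2 := by
      rw [norm_add_sq_real, hinner, norm_smul, norm_smul, hu1, hv01, mul_one,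
        mul_one, mul_zero, Real.norm_eq_abs, Real.norm_eq_abs, sq_abs, sq_abs,
        hc, hrsq]
      field_simp
      ring
    refine ⟨?_, ?_⟩
    · have h2 : ‖(k / n1) • u + c • v0‖ = Real.sqrt (s ^ 2) := by
        rw [← hnormsq, Real.sqrt_sq (norm_nonneg _)]
      rw [h2, Real.sqrt_sq hs.le]
    · rw [inner_add_left, real_inner_smul_left, real_inner_smul_left, huy1, hv0y1]
      field_simp
      ring
  -- value of the objective at these points
  have hval : ∀ c : ℝ, ⟪((k / n1) • u + c • v0 : EuclideanSpace ℝ (Fin d)), y2⟫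
      = (k / n1) * a + c * ‖w‖ := by
    intro c
    rw [inner_add_left, real_inner_smul_left, real_inner_smul_left, huy2, hv0y2]
  -- the bound for arbitrary z ∈ S
  have hbound : ∀ z ∈ S, |⟪z, y2⟫ - (k / n1) * a| ≤ r * ‖w‖ := by
    intro z hz
    rw [hS] at hz
    obtain ⟨hzn, hzk⟩ := hz
    set v : EuclideanSpace ℝ (Fin d) := z - (k / n1) • u with hvdef
    clear_value v
    have hzu : ⟪z, u⟫ = k / n1 := by
      have h1 : ⟪z, y1⟫ = n1 * ⟪z, u⟫ := by
        conv_lhs => rw [hy1u]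
        rw [real_inner_smul_right]
      rw [hzk] at h1
      rw [eq_div_iff hn1.ne']
      linear_combination -h1
    have huz : ⟪u, z⟫ = k / n1 := by rw [real_inner_comm]; exact hzu
    have huv : ⟪u, v⟫ = 0 := by
      rw [hvdef, inner_sub_right, real_inner_smul_right, huu, huz]; ring
    have hzv : z = (k / n1) • u + v := by rw [hvdef]; module
    have h1 : ‖z‖ ^ 2 = (k / n1) ^ 2 + ‖v‖ ^ 2 := by
      conv_lhs => rw [hzv]
      rw [norm_add_sq_real, real_inner_smul_left, huv, mul_zero, mul_zero,
        norm_smul, hu1, mul_one, Real.norm_eq_abs, sq_abs]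
      ring
    have hvsq : ‖v‖ ^ 2 = r ^ 2 := by
      rw [hzn] at h1
      have h3 : (k / n1) ^ 2 = k ^ 2 / n1 ^ 2 := by rw [div_pow]
      rw [hrsq]
      linarith [h3 ▸ h1]
    have hvn : ‖v‖ = r := by
      have h2 : ‖v‖ = Real.sqrt (r ^ 2) := by
        rw [← hvsq, Real.sqrt_sq (norm_nonneg _)]
      rw [h2, Real.sqrt_sq hr0]
    have hzw : ⟪v, w⟫ = ⟪z, w⟫ := by
      rw [hvdef, inner_sub_left, real_inner_smul_left, huw, mul_zero, sub_zero]
    have hzval : ⟪z, y2⟫ - (k / n1) * a = ⟪v, w⟫ := by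
      rw [hzw]
      conv_lhs => rw [hy2w]
      rw [inner_add_right, real_inner_smul_right, hzu]
      ring
    rw [hzval, ← hvn]
    exact abs_real_inner_le_norm v w
  constructor
  · refine ⟨(k / n1) • u + r • v0, hmem r rfl, ?_, ?_⟩
    · rw [hval r, ha, hw, hrdef]
      field_simp
    · intro z hz
      have h1 := abs_le.mp (hbound z hz)
      rw [hval r, hrdef]
      rw [hrdef] at h1
      linarith [h1.2]
  · refine ⟨(k / n1) • u + (-r) • v0, hmem (-r) (by ring), ?_, ?_⟩
    · rw [hval (-r), ha, hw, hrdef]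
      field_simp
      ring
    · intro z hz
      have h1 := abs_le.mp (hbound z hz)
      rw [hval (-r), hrdef]
      rw [hrdef] at h1
      linarith [h1.1]
end

section
/- Let d ≥ 8 and fix x ∈ ℝ^d with P x ≠ 0. For n ∈ ℝ^d define Q_x n = n − (⟪P x, n⟫/‖P x‖²)·P x, and define θ(x, n) = angle(n, P(Q_x n)). Then ∫ θ(x, n) dγ(n) < 2·arccos(√(1 − 1/(d−1))). -/
open MeasureTheory ProbabilityTheory
open scoped RealInnerProductSpace

open scoped ENNReal NNReal

/-- The standard Gaussian measure `N(0, I)` on `ℝ^d`. -/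
noncomputable def stdGaussian (d : ℕ) : Measure (EuclideanSpace ℝ (Fin d)) :=
  Measure.map (MeasurableEquiv.toLp 2 (Fin d → ℝ))
    (Measure.pi fun _ : Fin d => gaussianReal 0 1)

/-- The all-ones vector `𝟙 ∈ ℝ^d`. -/
noncomputable def allOnes (d : ℕ) : EuclideanSpace ℝ (Fin d) :=
  (WithLp.equiv 2 (Fin d → ℝ)).symm (fun _ => 1)

/-- The mean-centering map `P x = x − ((∑ i, x i)/d) • 𝟙`, the orthogonal projection
onto the hyperplane orthogonal to `𝟙`. -/
noncomputable def meanCenter {d : ℕ} (x : EuclideanSpace ℝ (Fin d)) :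
    EuclideanSpace ℝ (Fin d) :=
  x - ((∑ i, x i) / d) • allOnes d

lemma map_withDensity_equiv {α β : Type*} [MeasurableSpace α] [MeasurableSpace β]
    (μ : Measure α) (e : α ≃ᵐ β) (f : α → ℝ≥0∞) (hf : Measurable f) :
    Measure.map e (μ.withDensity f) = (Measure.map e μ).withDensity (fun y => f (e.symm y)) := by
  ext s hs
  rw [Measure.map_apply e.measurable hs, withDensity_apply _ (e.measurable hs),
    withDensity_apply _ hs,
    setLIntegral_map (f := fun y => f (e.symm y)) hs (hf.comp e.symm.measurable) e.measurable]
  simp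

lemma pi_gaussian_eq_withDensity (d : ℕ) :
    (Measure.pi fun _ : Fin d => gaussianReal 0 1) =
      (volume : Measure (Fin d → ℝ)).withDensity
        (fun x => ENNReal.ofReal (∏ i, gaussianPDFReal 0 1 (x i))) := by
  refine Measure.pi_eq fun s hs => ?_
  rw [withDensity_apply _ (MeasurableSet.univ_pi hs)]
  have hbox : ∀ x : Fin d → ℝ,
      (Set.univ.pi s).indicator (fun x => ENNReal.ofReal (∏ i, gaussianPDFReal 0 1 (x i))) x
        = ENNReal.ofReal (∏ i, (s i).indicator (gaussianPDFReal 0 1) (x i)) := by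
    intro x
    by_cases hx : x ∈ Set.univ.pi s
    · rw [Set.indicator_of_mem hx]
      congr 1
      exact Finset.prod_congr rfl fun i _ =>
        (Set.indicator_of_mem (hx i (Set.mem_univ i)) _).symm
    · rw [Set.indicator_of_notMem hx]
      symm
      rw [ENNReal.ofReal_eq_zero]
      simp only [Set.mem_pi, Set.mem_univ, true_implies, not_forall] at hx
      obtain ⟨j, hj⟩ := hx
      exact le_of_eq (Finset.prod_eq_zero (Finset.mem_univ j) (Set.indicator_of_notMem hj _))
  have hint : Integrable (fun x : Fin d → ℝ =>
      ∏ i, (s i).indicator (gaussianPDFReal 0 1) (x i)) := by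
    apply Integrable.fintype_prod (f := fun i => (s i).indicator (gaussianPDFReal 0 1))
    intro i
    exact (integrable_gaussianPDFReal 0 1).indicator (hs i)
  have hnn : 0 ≤ᵐ[(volume : Measure (Fin d → ℝ))]
      (fun x : Fin d → ℝ => ∏ i, (s i).indicator (gaussianPDFReal 0 1) (x i)) := by
    filter_upwards with x
    exact Finset.prod_nonneg fun i _ => Set.indicator_nonneg
      (fun t _ => gaussianPDFReal_nonneg 0 1 t) _
  rw [← lintegral_indicator (MeasurableSet.univ_pi hs) _, lintegral_congr hbox,
    ← ofReal_integral_eq_lintegral_ofReal hint hnn,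
    integral_fintype_prod_volume_eq_prod (f := fun i => (s i).indicator (gaussianPDFReal 0 1)),
    ENNReal.ofReal_prod_of_nonneg (fun i _ => integral_nonneg
      (Set.indicator_nonneg fun t _ => gaussianPDFReal_nonneg 0 1 t))]
  exact Finset.prod_congr rfl fun i _ => by
    rw [gaussianReal_apply_eq_integral 0 one_ne_zero (s i), ← integral_indicator (hs i)]

noncomputable def stdDensity (d : ℕ) : EuclideanSpace ℝ (Fin d) → ℝ≥0∞ :=
  fun y => ENNReal.ofReal ((Real.sqrt (2 * Real.pi))⁻¹ ^ d * Real.exp (-‖y‖ ^ 2 / 2))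

lemma stdGaussian_eq_withDensity (d : ℕ) :
    stdGaussian d = (volume : Measure (EuclideanSpace ℝ (Fin d))).withDensity (stdDensity d) := by
  rw [_root_.stdGaussian, pi_gaussian_eq_withDensity,
    map_withDensity_equiv _ _ _ (by
      apply Measurable.ennreal_ofReal
      exact Finset.measurable_prod _ fun i _ =>
        (measurable_gaussianPDFReal 0 1).comp (measurable_pi_apply i)),
    (show Measure.map (MeasurableEquiv.toLp 2 (Fin d → ℝ)) (volume : Measure (Fin d → ℝ)) = volume from
      (MeasurePreserving.symm _ (EuclideanSpace.volume_preserving_symm_measurableEquiv_toLp (Fin d))).map_eq)]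
  congr 1
  funext y
  rw [stdDensity]
  congr 1
  have hcoord : ∀ i, ((MeasurableEquiv.toLp 2 (Fin d → ℝ)).symm y) i = y i :=
    fun i => rfl
  calc ∏ i, gaussianPDFReal 0 1 (((MeasurableEquiv.toLp 2 (Fin d → ℝ)).symm y) i)
      = ∏ i, (Real.sqrt (2 * Real.pi))⁻¹ * Real.exp (-(y i) ^ 2 / 2) := by
        refine Finset.prod_congr rfl fun i _ => ?_
        rw [hcoord i, gaussianPDFReal]
        norm_num
    _ = (Real.sqrt (2 * Real.pi))⁻¹ ^ d * Real.exp (-‖y‖ ^ 2 / 2) := by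
        rw [Finset.prod_mul_distrib, Finset.prod_const, ← Real.exp_sum]
        simp only [Finset.card_univ, Fintype.card_fin]
        congr 1
        rw [EuclideanSpace.norm_eq]
        rw [Real.sq_sqrt (Finset.sum_nonneg fun i _ => sq_nonneg _)]
        rw [← Finset.sum_div, ← Finset.sum_neg_distrib]
        simp [Real.norm_eq_abs, sq_abs]

lemma stdGaussian_map_isometry {d : ℕ}
    (f : EuclideanSpace ℝ (Fin d) ≃ₗᵢ[ℝ] EuclideanSpace ℝ (Fin d)) :
    Measure.map f (stdGaussian d) = stdGaussian d := by
  have hmeas : Measurable (stdDensity d) :=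
    (Continuous.measurable (by continuity : Continuous fun y : EuclideanSpace ℝ (Fin d) =>
      (Real.sqrt (2 * Real.pi))⁻¹ ^ d * Real.exp (-‖y‖ ^ 2 / 2))).ennreal_ofReal
  have he : Measure.map (⇑f) (stdGaussian d)
      = Measure.map (f.toHomeomorph.toMeasurableEquiv) (stdGaussian d) := rfl
  rw [he, stdGaussian_eq_withDensity, map_withDensity_equiv _ _ _ hmeas]
  have hvol : Measure.map (f.toHomeomorph.toMeasurableEquiv)
      (volume : Measure (EuclideanSpace ℝ (Fin d))) = volume := f.measurePreserving.map_eq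
  rw [hvol]
  congr 1
  funext y
  have : ‖(f.toHomeomorph.toMeasurableEquiv.symm y : EuclideanSpace ℝ (Fin d))‖ = ‖y‖ := by
    have : f.toHomeomorph.toMeasurableEquiv.symm y = f.symm y := rfl
    rw [this, f.symm.norm_map]
  simp only [stdDensity, this]

instance stdGaussian_isProbability (d : ℕ) : IsProbabilityMeasure (stdGaussian d) := by
  rw [_root_.stdGaussian]
  exact Measure.isProbabilityMeasure_map (MeasurableEquiv.measurable _).aemeasurable

lemma integral_stdGaussian_comp {d : ℕ}
    (f : EuclideanSpace ℝ (Fin d) ≃ₗᵢ[ℝ] EuclideanSpace ℝ (Fin d))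
    (g : EuclideanSpace ℝ (Fin d) → ℝ) :
    ∫ y, g (f y) ∂(stdGaussian d) = ∫ y, g y ∂(stdGaussian d) := by
  have hp : MeasurePreserving f (stdGaussian d) (stdGaussian d) :=
    ⟨f.continuous.measurable, stdGaussian_map_isometry f⟩
  exact hp.integral_comp (f.toHomeomorph.toMeasurableEquiv.measurableEmbedding) g

lemma stdGaussian_absolutelyContinuous (d : ℕ) :
    stdGaussian d ≪ (volume : Measure (EuclideanSpace ℝ (Fin d))) := by
  rw [stdGaussian_eq_withDensity]
  exact withDensity_absolutelyContinuous _ _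

section RealLemmas
open Real
-- θ ≤ sin θ + sin² θ on [0, π/2]
lemma theta_le_sin_add_sin_sq {θ : ℝ} (h0 : 0 ≤ θ) (h2 : θ ≤ π / 2) :
    θ ≤ Real.sin θ + Real.sin θ ^ 2 := by
  rcases eq_or_lt_of_le h0 with rfl | hpos
  · simp
  rcases le_or_gt θ 1 with h1 | h1
  · have hs : θ - θ ^ 3 / 4 < Real.sin θ := by
      have := Real.sin_gt_sub_cube hpos
      linarith [pow_pos hpos 3]
    have hθ3 : θ ^ 3 ≤ θ := by nlinarith [sq_nonneg θ, sq_nonneg (1 - θ)]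
    have hnn : 0 ≤ θ - θ ^ 3 / 4 := by linarith
    have hsq : (θ - θ ^ 3 / 4) ^ 2 ≤ Real.sin θ ^ 2 := by
      have := pow_le_pow_left₀ hnn hs.le 2
      exact this
    nlinarith [hs, hsq, sq_nonneg θ, sq_nonneg (1 - θ^2/4)]
  · have hpi : π < 3.15 := by
      have := Real.pi_lt_d2
      linarith
    have hcos : Real.sin θ = Real.cos (π / 2 - θ) := (Real.cos_pi_div_two_sub θ).symm
    have hlb : 1 - (π / 2 - θ) ^ 2 / 2 ≤ Real.sin θ := by
      rw [hcos]; exact Real.one_sub_sq_div_two_le_cos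
    rcases le_or_gt θ 1.3 with h13 | h13
    · have hu : (π / 2 - θ) ≤ 0.575 := by linarith
      have hu0 : 0 ≤ π / 2 - θ := by linarith
      have hsin : (0.83 : ℝ) ≤ Real.sin θ := by nlinarith
      nlinarith [hsin]
    · have hu : (π / 2 - θ) ≤ 0.275 := by linarith
      have hu0 : 0 ≤ π / 2 - θ := by linarith
      have hsin : (0.96 : ℝ) ≤ Real.sin θ := by nlinarith
      nlinarith [hsin]

-- KEY: arccos t ≤ √(1−t²) + (1−t²) for t ∈ [0,1]
lemma arccos_le_bound {t : ℝ} (h0 : 0 ≤ t) (h1 : t ≤ 1) :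
    Real.arccos t ≤ Real.sqrt (1 - t ^ 2) + (1 - t ^ 2) := by
  have ht2 : 0 ≤ 1 - t ^ 2 := by nlinarith
  have hsin : Real.sin (Real.arccos t) = Real.sqrt (1 - t ^ 2) := Real.sin_arccos t
  have hsq : Real.sin (Real.arccos t) ^ 2 = 1 - t ^ 2 := by
    rw [hsin]; exact Real.sq_sqrt ht2
  have hθ0 : 0 ≤ Real.arccos t := Real.arccos_nonneg t
  have hθ2 : Real.arccos t ≤ π / 2 := by
    rw [Real.arccos_eq_pi_div_two_sub_arcsin]
    have := Real.arcsin_nonneg.mpr h0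
    linarith
  calc Real.arccos t ≤ Real.sin (Real.arccos t) + Real.sin (Real.arccos t) ^ 2 :=
        theta_le_sin_add_sin_sq hθ0 hθ2
    _ = Real.sqrt (1 - t ^ 2) + (1 - t ^ 2) := by rw [hsin, Real.sq_sqrt ht2]

-- NUM: √(2/D) + 2/D < 2√(1/(D−1)) for D ≥ 8
lemma num_ineq {D : ℝ} (hD : 8 ≤ D) :
    Real.sqrt (2 / D) + 2 / D < 2 * Real.sqrt (1 / (D - 1)) := by
  have hD0 : (0:ℝ) < D := by linarith
  have hD1 : (0:ℝ) < D - 1 := by linarith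
  set R := Real.sqrt (D - 1) with hR
  have hR0 : 0 < R := Real.sqrt_pos.mpr hD1
  have hR2 : R ^ 2 = D - 1 := Real.sq_sqrt hD1.le
  set A := Real.sqrt (2 / D) with hA
  have hA0 : 0 ≤ A := Real.sqrt_nonneg _
  have hA2 : A ^ 2 = 2 / D := Real.sq_sqrt (by positivity)
  have hC : 2 * Real.sqrt (1 / (D - 1)) = 2 / R := by
    rw [one_div, Real.sqrt_inv, hR]; ring
  have hRD : R < D := by
    have : R < Real.sqrt (D ^ 2) := Real.sqrt_lt_sqrt hD1.le (by nlinarith)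
    rwa [Real.sqrt_sq hD0.le] at this
  have h8 : 8 * D * R < 2 * D ^ 2 + 6 * D - 4 := by
    have hpos : 0 < 2 * D ^ 2 + 6 * D - 4 := by nlinarith
    have hfac : (5:ℝ) ≤ (D - 3) * (D - 7) := by nlinarith
    have hsq : (8 * D * R) ^ 2 < (2 * D ^ 2 + 6 * D - 4) ^ 2 := by
      have : (8 * D * R) ^ 2 = 64 * D ^ 2 * (D - 1) := by
        rw [mul_pow, mul_pow, hR2]; ring
      rw [this]
      nlinarith [sq_nonneg D, hfac, hD0]
    exact lt_of_pow_lt_pow_left₀ 2 hpos.le hsq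
  -- T := A * D * R
  have hT2 : (A * (D * R)) ^ 2 = 2 * D * (D - 1) := by
    rw [mul_pow, hA2, mul_pow, hR2]
    field_simp
  have hDR : 0 < D * R := by positivity
  have h2D2R : 0 ≤ 2 * D - 2 * R := by linarith
  have hT : A * (D * R) < 2 * D - 2 * R := by
    have hsq : (A * (D * R)) ^ 2 < (2 * D - 2 * R) ^ 2 := by
      rw [hT2]
      have : (2 * D - 2 * R) ^ 2 = 4 * D ^ 2 - 8 * D * R + 4 * (D - 1) := by
        rw [← hR2]; ring
      rw [this]
      nlinarith [h8]
    exact lt_of_pow_lt_pow_left₀ 2 h2D2R hsq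
  rw [hC]
  rw [← mul_lt_mul_iff_left₀ hDR]
  have hB : 2 / D * (D * R) = 2 * R := by field_simp
  have hCC : 2 / R * (D * R) = 2 * D := by
    field_simp
  calc (A + 2 / D) * (D * R) = A * (D * R) + 2 / D * (D * R) := by ring
    _ = A * (D * R) + 2 * R := by rw [hB]
    _ < 2 * D := by linarith
    _ = 2 / R * (D * R) := hCC.symm

lemma pointwise_angle_bound {E : Type*} [NormedAddCommGroup E] [InnerProductSpace ℝ E]
    {e₁ e₂ n : E} (h1 : ‖e₁‖ = 1) (h2 : ‖e₂‖ = 1) (h12 : ⟪e₁, e₂⟫ = 0) (hn : n ≠ 0) :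
    InnerProductGeometry.angle n (n - ⟪e₁, n⟫ • e₁ - ⟪e₂, n⟫ • e₂)
      ≤ Real.sqrt ((⟪e₁, n⟫ ^ 2 + ⟪e₂, n⟫ ^ 2) / ‖n‖ ^ 2)
        + (⟪e₁, n⟫ ^ 2 + ⟪e₂, n⟫ ^ 2) / ‖n‖ ^ 2 := by
  set p := ⟪e₁, n⟫ with hp
  set q := ⟪e₂, n⟫ with hq
  have hn0 : (0:ℝ) < ‖n‖ := norm_pos_iff.mpr hn
  set u : E := p • e₁ + q • e₂ with hu
  have hW : n - p • e₁ - q • e₂ = n - u := by rw [hu, sub_sub]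
  have hnu : ⟪n, u⟫ = p ^ 2 + q ^ 2 := by
    have c1 : ⟪n, e₁⟫ = p := by rw [hp]; exact real_inner_comm e₁ n
    have c2 : ⟪n, e₂⟫ = q := by rw [hq]; exact real_inner_comm e₂ n
    rw [hu, inner_add_right, real_inner_smul_right, real_inner_smul_right, c1, c2]
    ring
  have hu2 : ‖u‖ ^ 2 = p ^ 2 + q ^ 2 := by
    rw [hu, norm_add_sq_real, norm_smul, norm_smul, real_inner_smul_left,
      real_inner_smul_right, h12, h1, h2]
    simp [sq_abs]
  have hW2 : ‖n - u‖ ^ 2 = ‖n‖ ^ 2 - (p ^ 2 + q ^ 2) := by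
    rw [norm_sub_sq_real, hnu, hu2]
    ring
  have hinner : ⟪n, n - u⟫ = ‖n - u‖ ^ 2 := by
    rw [inner_sub_right, hnu, real_inner_self_eq_norm_sq, hW2]
  have hWn : ‖n - u‖ ≤ ‖n‖ := by
    have h := hW2
    have : ‖n - u‖ ^ 2 ≤ ‖n‖ ^ 2 := by nlinarith [sq_nonneg p, sq_nonneg q]
    calc ‖n - u‖ = Real.sqrt (‖n - u‖ ^ 2) := (Real.sqrt_sq (norm_nonneg _)).symm
      _ ≤ Real.sqrt (‖n‖ ^ 2) := Real.sqrt_le_sqrt this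
      _ = ‖n‖ := Real.sqrt_sq (norm_nonneg _)
  rw [hW]
  by_cases hW0 : n - u = 0
  · rw [hW0, InnerProductGeometry.angle_zero_right]
    have hpq : p ^ 2 + q ^ 2 = ‖n‖ ^ 2 := by
      have := hW2
      rw [hW0] at this
      simp at this
      linarith
    rw [hpq, div_self (by positivity)]
    rw [Real.sqrt_one]
    linarith [Real.pi_le_four]
  · have hW0' : (0:ℝ) < ‖n - u‖ := norm_pos_iff.mpr hW0
    have hangle : InnerProductGeometry.angle n (n - u)
        = Real.arccos (‖n - u‖ / ‖n‖) := by
      rw [InnerProductGeometry.angle, hinner]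
      congr 1
      field_simp
    rw [hangle]
    have ht0 : 0 ≤ ‖n - u‖ / ‖n‖ := by positivity
    have ht1 : ‖n - u‖ / ‖n‖ ≤ 1 := (div_le_one hn0).mpr hWn
    have hS : 1 - (‖n - u‖ / ‖n‖) ^ 2 = (p ^ 2 + q ^ 2) / ‖n‖ ^ 2 := by
      rw [div_pow, hW2]
      field_simp
      ring
    calc Real.arccos (‖n - u‖ / ‖n‖)
        ≤ Real.sqrt (1 - (‖n - u‖ / ‖n‖) ^ 2) + (1 - (‖n - u‖ / ‖n‖) ^ 2) :=
          arccos_le_bound ht0 ht1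
      _ = Real.sqrt ((p ^ 2 + q ^ 2) / ‖n‖ ^ 2) + (p ^ 2 + q ^ 2) / ‖n‖ ^ 2 := by rw [hS]

end RealLemmas

section euclid
variable {d : ℕ}

lemma euclid_inner (x y : EuclideanSpace ℝ (Fin d)) :
    ⟪x, y⟫ = ∑ i, x i * y i := by
  simp [PiLp.inner_apply, RCLike.inner_apply]
  exact Finset.sum_congr rfl fun i _ => mul_comm _ _

lemma allOnes_apply (i : Fin d) : allOnes d i = 1 := rfl

lemma meanCenter_apply (x : EuclideanSpace ℝ (Fin d)) (i : Fin d) :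
    meanCenter x i = x i - (∑ j, x j) / d := by
  rw [meanCenter]
  simp [allOnes_apply]

lemma sum_meanCenter (hd : d ≠ 0) (x : EuclideanSpace ℝ (Fin d)) :
    ∑ i, meanCenter x i = 0 := by
  simp only [meanCenter_apply]
  rw [Finset.sum_sub_distrib, Finset.sum_const, Finset.card_univ, Fintype.card_fin]
  have : (d : ℝ) ≠ 0 := Nat.cast_ne_zero.mpr hd
  rw [nsmul_eq_mul, mul_div_cancel₀ _ this, sub_self]

lemma inner_allOnes (z : EuclideanSpace ℝ (Fin d)) :
    ⟪allOnes d, z⟫ = ∑ i, z i := by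
  rw [euclid_inner]
  simp [allOnes_apply]

lemma norm_allOnes (d : ℕ) : ‖allOnes d‖ = Real.sqrt d := by
  rw [EuclideanSpace.norm_eq]
  simp [allOnes_apply]

lemma euclid_norm_sq (y : EuclideanSpace ℝ (Fin d)) :
    ‖y‖ ^ 2 = ∑ i, (y i) ^ 2 := by
  rw [EuclideanSpace.norm_eq, Real.sq_sqrt (by positivity)]
  simp [Real.norm_eq_abs, sq_abs]

lemma meanCenter_eq_sub_proj (hd : d ≠ 0) (z : EuclideanSpace ℝ (Fin d)) :
    meanCenter z = z - ⟪(Real.sqrt d)⁻¹ • allOnes d, z⟫ • (Real.sqrt d)⁻¹ • allOnes d := by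
  have hd0 : (0:ℝ) < d := Nat.cast_pos.mpr (Nat.pos_of_ne_zero hd)
  rw [meanCenter, real_inner_smul_left, inner_allOnes, smul_smul]
  congr 1
  have hinv : (Real.sqrt d)⁻¹ * (Real.sqrt d)⁻¹ = (d:ℝ)⁻¹ := by
    rw [← mul_inv, Real.mul_self_sqrt hd0.le]
  rw [div_eq_mul_inv, ← hinv]
  ring
end euclid

section coord
variable {d : ℕ}

noncomputable def coordFrac (d : ℕ) (i : Fin d) : EuclideanSpace ℝ (Fin d) → ℝ :=
  fun y => (y i) ^ 2 / ‖y‖ ^ 2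

lemma coord_measurable (i : Fin d) :
    Measurable (fun y : EuclideanSpace ℝ (Fin d) => y i) :=
  (measurable_pi_apply i).comp (WithLp.measurable_ofLp 2 (Fin d → ℝ))

lemma coordFrac_measurable (i : Fin d) : Measurable (coordFrac d i) :=
  ((coord_measurable i).pow_const 2).div ((measurable_norm).pow_const 2)

lemma coordFrac_nonneg (i : Fin d) (y : EuclideanSpace ℝ (Fin d)) :
    0 ≤ coordFrac d i y := by
  rw [coordFrac]; positivity

lemma coordFrac_le_one (i : Fin d) (y : EuclideanSpace ℝ (Fin d)) :
    coordFrac d i y ≤ 1 := by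
  rcases eq_or_ne y 0 with rfl | hy
  · simp [coordFrac]
  · have h0 : (0:ℝ) < ‖y‖ ^ 2 := by
      have := norm_pos_iff.mpr hy
      positivity
    rw [coordFrac, div_le_one h0, euclid_norm_sq]
    exact Finset.single_le_sum (fun j _ => sq_nonneg (y j)) (Finset.mem_univ i)

lemma coordFrac_integrable (i : Fin d) :
    Integrable (coordFrac d i) (stdGaussian d) := by
  refine Integrable.mono' (integrable_const 1)
    (coordFrac_measurable i).aestronglyMeasurable ?_
  filter_upwards with y
  rw [Real.norm_eq_abs, abs_of_nonneg (coordFrac_nonneg i y)]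
  exact coordFrac_le_one i y

lemma coordFrac_integral_swap (i j : Fin d) :
    ∫ y, coordFrac d i y ∂(stdGaussian d) = ∫ y, coordFrac d j y ∂(stdGaussian d) := by
  classical
  set f := LinearIsometryEquiv.piLpCongrLeft 2 ℝ ℝ (Equiv.swap i j) with hf
  have happ : ∀ (y : EuclideanSpace ℝ (Fin d)), coordFrac d i (f y) = coordFrac d j y := by
    intro y
    have h1 : f y i = y j := by
      rw [hf, LinearIsometryEquiv.piLpCongrLeft_apply, Equiv.piCongrLeft'_apply,
        Equiv.symm_swap, Equiv.swap_apply_left]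
    have h2 : ‖f y‖ = ‖y‖ := f.norm_map y
    rw [coordFrac, coordFrac, h1, h2]
  calc ∫ y, coordFrac d i y ∂(stdGaussian d)
      = ∫ y, coordFrac d i (f y) ∂(stdGaussian d) :=
        (integral_stdGaussian_comp f (coordFrac d i)).symm
    _ = ∫ y, coordFrac d j y ∂(stdGaussian d) := by
        congr 1
        funext y
        exact happ y

lemma stdGaussian_singleton_zero (hd : d ≠ 0) : stdGaussian d {(0 : EuclideanSpace ℝ (Fin d))} = 0 := by
  haveI : Nontrivial (EuclideanSpace ℝ (Fin d)) := by
    apply Module.nontrivial_of_finrank_pos (R := ℝ)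
    rw [finrank_euclideanSpace_fin]
    omega
  apply stdGaussian_absolutelyContinuous
  have hbot : ((⊥ : Submodule ℝ (EuclideanSpace ℝ (Fin d))) : Set (EuclideanSpace ℝ (Fin d)))
      = {0} := rfl
  rw [← hbot]
  exact Measure.addHaar_submodule _ _ bot_ne_top

lemma integral_coordFrac (hd : d ≠ 0) (i : Fin d) :
    ∫ y, coordFrac d i y ∂(stdGaussian d) = 1 / d := by
  have hd0 : (0:ℝ) < d := Nat.cast_pos.mpr (Nat.pos_of_ne_zero hd)
  have hae : ∀ᵐ y ∂(stdGaussian d), y ≠ (0 : EuclideanSpace ℝ (Fin d)) := by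
    rw [ae_iff]
    convert stdGaussian_singleton_zero hd using 2
    ext y
    simp
  have hsum : ∫ y, (∑ j, coordFrac d j y) ∂(stdGaussian d) = 1 := by
    have heq : (fun y => ∑ j, coordFrac d j y) =ᵐ[stdGaussian d] (fun _ => (1:ℝ)) := by
      filter_upwards [hae] with y hy
      have hny : (0:ℝ) < ‖y‖ ^ 2 := by
        have := norm_pos_iff.mpr hy
        positivity
      simp only [coordFrac]
      rw [← Finset.sum_div, ← euclid_norm_sq, div_self (ne_of_gt hny)]
    rw [integral_congr_ae heq]
    simp
  rw [integral_finset_sum _ (fun j _ => coordFrac_integrable j)] at hsum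
  have hconst : ∀ j, ∫ y, coordFrac d j y ∂(stdGaussian d)
      = ∫ y, coordFrac d i y ∂(stdGaussian d) := fun j => coordFrac_integral_swap j i
  rw [Finset.sum_congr rfl (fun j _ => hconst j), Finset.sum_const, Finset.card_univ,
    Fintype.card_fin, nsmul_eq_mul] at hsum
  field_simp at hsum ⊢
  linarith
end coord

/-- **Theorem 1 of the paper, explicit form.** For `n ~ N(0, I)` in `ℝ^d` with `d ≥ 8`,
with `Q_x n = n − (⟪P x, n⟫/‖P x‖²) • P x`, the expected angle between `n` and
`P (Q_x n)` (a positive multiple of the LayerNorm gradient at `x`) is less than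
`2 arccos √(1 − 1/(d−1))`. -/
theorem layerNorm_expected_angle_explicit {d : ℕ} (hd : 8 ≤ d)
    (x : EuclideanSpace ℝ (Fin d)) (hx : meanCenter x ≠ 0) :
    ∫ n, InnerProductGeometry.angle n
        (meanCenter (n - (⟪meanCenter x, n⟫ / ‖meanCenter x‖ ^ 2) • meanCenter x))
        ∂(stdGaussian d)
      < 2 * Real.arccos (Real.sqrt (1 - 1 / ((d : ℝ) - 1))) := by
  classical
  have hd0 : d ≠ 0 := by omega
  have hdR : (8:ℝ) ≤ (d:ℝ) := by exact_mod_cast hd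
  have hdpos : (0:ℝ) < d := by linarith
  set γ := stdGaussian d with hγ
  set v := meanCenter x with hv
  have hnv : (0:ℝ) < ‖v‖ := norm_pos_iff.mpr hx
  set e₁ : EuclideanSpace ℝ (Fin d) := ‖v‖⁻¹ • v with he₁
  set e₂ : EuclideanSpace ℝ (Fin d) := (Real.sqrt d)⁻¹ • allOnes d with he₂
  have hsqd : (0:ℝ) < Real.sqrt d := Real.sqrt_pos.mpr hdpos
  have hne₁ : ‖e₁‖ = 1 := by
    rw [he₁, norm_smul, Real.norm_eq_abs, abs_of_pos (inv_pos.mpr hnv)]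
    field_simp
  have hne₂ : ‖e₂‖ = 1 := by
    rw [he₂, norm_smul, norm_allOnes, Real.norm_eq_abs, abs_of_pos (inv_pos.mpr hsqd)]
    field_simp
  have hsumv : ∑ i, v i = 0 := sum_meanCenter hd0 x
  have hinner12 : ⟪e₁, e₂⟫ = 0 := by
    rw [he₁, he₂, real_inner_smul_left, real_inner_smul_right]
    have h0 : ⟪v, allOnes d⟫ = 0 := by rw [real_inner_comm, inner_allOnes, hsumv]
    rw [h0]
    ring
  set i₀ : Fin d := ⟨0, by omega⟩ with hi₀
  set i₁ : Fin d := ⟨1, by omega⟩ with hi₁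
  have hi01 : i₁ ≠ i₀ := by
    simp [hi₀, hi₁, Fin.ext_iff]
  set vf : Fin d → EuclideanSpace ℝ (Fin d) := fun k => if k = i₀ then e₁ else e₂ with hvf
  have honb : Orthonormal ℝ (({i₀, i₁} : Set (Fin d)).restrict vf) := by
    constructor
    · rintro ⟨k, hk⟩
      change ‖(if k = i₀ then e₁ else e₂)‖ = 1
      by_cases h : k = i₀
      · rw [if_pos h]; exact hne₁
      · rw [if_neg h]; exact hne₂
    · rintro ⟨k, hk⟩ ⟨l, hl⟩ hkl
      have hkl' : k ≠ l := by simpa [Subtype.ext_iff] using hkl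
      change ⟪(if k = i₀ then e₁ else e₂), (if l = i₀ then e₁ else e₂)⟫ = 0
      have hmem : ∀ m, m ∈ ({i₀, i₁} : Set (Fin d)) → m ≠ i₀ → m = i₁ := by
        intro m hm hm0
        rcases hm with h | h
        · exact absurd h hm0
        · exact h
      by_cases hk0 : k = i₀ <;> by_cases hl0 : l = i₀
      · exact absurd (hk0.trans hl0.symm) hkl'
      · rw [if_pos hk0, if_neg hl0]; exact hinner12
      · rw [if_neg hk0, if_pos hl0, real_inner_comm]; exact hinner12
      · exact absurd ((hmem k hk hk0).trans (hmem l hl hl0).symm) hkl'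
  have hcard : Module.finrank ℝ (EuclideanSpace ℝ (Fin d)) = Fintype.card (Fin d) := by
    simp [finrank_euclideanSpace_fin]
  obtain ⟨b, hb⟩ := honb.exists_orthonormalBasis_extension_of_card_eq hcard
  have hb0 : b i₀ = e₁ := by
    have h := hb i₀ (by simp)
    simpa [hvf] using h
  have hb1 : b i₁ = e₂ := by
    have h := hb i₁ (by simp)
    simpa [hvf, hi01] using h
  -- the W identity
  have hWid : ∀ n : EuclideanSpace ℝ (Fin d),
      meanCenter (n - (⟪v, n⟫ / ‖v‖ ^ 2) • v) = n - ⟪e₁, n⟫ • e₁ - ⟪e₂, n⟫ • e₂ := by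
    intro n
    rw [meanCenter_eq_sub_proj hd0, ← he₂]
    have h2 : ⟪e₂, n - (⟪v, n⟫ / ‖v‖ ^ 2) • v⟫ = ⟪e₂, n⟫ := by
      rw [inner_sub_right, real_inner_smul_right]
      have hev : ⟪e₂, v⟫ = 0 := by
        rw [he₂, real_inner_smul_left, inner_allOnes, hsumv]
        ring
      rw [hev]
      ring
    rw [h2]
    have h1 : (⟪v, n⟫ / ‖v‖ ^ 2) • v = ⟪e₁, n⟫ • e₁ := by
      rw [he₁, real_inner_smul_left, smul_smul]
      congr 1
      rw [div_eq_mul_inv, pow_two, mul_inv]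
      ring
    rw [h1]
  -- g and its integrals
  set g : EuclideanSpace ℝ (Fin d) → ℝ := fun y => coordFrac d i₀ y + coordFrac d i₁ y with hgdef
  have hg_meas : Measurable g := (coordFrac_measurable i₀).add (coordFrac_measurable i₁)
  have hg_nonneg : ∀ y, 0 ≤ g y := fun y =>
    add_nonneg (coordFrac_nonneg _ _) (coordFrac_nonneg _ _)
  have hg_le : ∀ y, g y ≤ 2 := fun y => by
    have := coordFrac_le_one i₀ y
    have := coordFrac_le_one i₁ y
    simp only [hgdef]
    linarith
  have hg_int : Integrable g γ := (coordFrac_integrable i₀).add (coordFrac_integrable i₁)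
  have hg_val : ∫ y, g y ∂γ = 2 / d := by
    simp only [hgdef]
    rw [integral_add (coordFrac_integrable i₀) (coordFrac_integrable i₁),
      integral_coordFrac hd0 i₀, integral_coordFrac hd0 i₁]
    ring
  have hsqrt2 : Real.sqrt 2 ≤ 2 := by
    have h4 : Real.sqrt 4 = 2 := by
      rw [show (4:ℝ) = 2^2 by norm_num, Real.sqrt_sq (by norm_num : (0:ℝ) ≤ 2)]
    calc Real.sqrt 2 ≤ Real.sqrt 4 := Real.sqrt_le_sqrt (by norm_num)
      _ = 2 := h4
  have hsg_meas : Measurable (fun y => Real.sqrt (g y)) := hg_meas.sqrt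
  have hsg_int : Integrable (fun y => Real.sqrt (g y)) γ := by
    refine Integrable.mono' (integrable_const 2) hsg_meas.aestronglyMeasurable ?_
    filter_upwards with y
    rw [Real.norm_eq_abs, abs_of_nonneg (Real.sqrt_nonneg _)]
    calc Real.sqrt (g y) ≤ Real.sqrt 2 := Real.sqrt_le_sqrt (hg_le y)
      _ ≤ 2 := hsqrt2
  have hs_nonneg : 0 ≤ ∫ y, Real.sqrt (g y) ∂γ := integral_nonneg fun y => Real.sqrt_nonneg _
  have hCS : (∫ y, Real.sqrt (g y) ∂γ) ^ 2 ≤ 2 / d := by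
    set c := ∫ y, Real.sqrt (g y) ∂γ with hc
    have hnn : 0 ≤ ∫ y, (Real.sqrt (g y) - c) ^ 2 ∂γ := integral_nonneg fun y => sq_nonneg _
    have hexp : (fun y => (Real.sqrt (g y) - c) ^ 2)
        = fun y => (g y - (2 * c) * Real.sqrt (g y)) + c ^ 2 := by
      funext y
      have hsq : Real.sqrt (g y) ^ 2 = g y := Real.sq_sqrt (hg_nonneg y)
      rw [sub_sq, hsq]
      ring
    have hint1 : Integrable (fun y => g y - (2 * c) * Real.sqrt (g y)) γ :=
      hg_int.sub (hsg_int.const_mul _)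
    have hint2 : Integrable (fun _ : EuclideanSpace ℝ (Fin d) => c ^ 2) γ := integrable_const _
    rw [hexp, integral_add hint1 hint2,
      integral_sub hg_int (hsg_int.const_mul _), integral_const_mul, integral_const] at hnn
    simp only [probReal_univ, smul_eq_mul, one_mul] at hnn
    rw [hg_val, ← hc] at hnn
    nlinarith [hnn]
  have hsg_le : ∫ y, Real.sqrt (g y) ∂γ ≤ Real.sqrt (2 / d) := by
    rw [show ∫ y, Real.sqrt (g y) ∂γ = Real.sqrt ((∫ y, Real.sqrt (g y) ∂γ)^2) by
      rw [Real.sqrt_sq hs_nonneg]]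
    exact Real.sqrt_le_sqrt hCS
  -- rewrite the integrand
  simp only [← hv, hWid]
  -- a.e. pointwise bound
  have hae0 : ∀ᵐ n ∂γ, n ≠ (0 : EuclideanSpace ℝ (Fin d)) := by
    rw [ae_iff]
    convert stdGaussian_singleton_zero hd0 using 2
    ext y
    simp
  have hbd : ∀ᵐ n ∂γ, InnerProductGeometry.angle n (n - ⟪e₁, n⟫ • e₁ - ⟪e₂, n⟫ • e₂)
      ≤ Real.sqrt (g (b.repr n)) + g (b.repr n) := by
    filter_upwards [hae0] with n hn
    have hrepr0 : b.repr n i₀ = ⟪e₁, n⟫ := by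
      rw [b.repr_apply_apply, hb0]
    have hrepr1 : b.repr n i₁ = ⟪e₂, n⟫ := by
      rw [b.repr_apply_apply, hb1]
    have hnorm : ‖b.repr n‖ = ‖n‖ := b.repr.norm_map n
    have hgn : g (b.repr n) = (⟪e₁, n⟫ ^ 2 + ⟪e₂, n⟫ ^ 2) / ‖n‖ ^ 2 := by
      simp only [hgdef, coordFrac]
      rw [hrepr0, hrepr1, hnorm, ← add_div]
    rw [hgn]
    exact pointwise_angle_bound hne₁ hne₂ hinner12 hn
  -- measurability and integrability of angle integrand
  have hF_cont : Continuous (fun n : EuclideanSpace ℝ (Fin d) =>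
      n - ⟪e₁, n⟫ • e₁ - ⟪e₂, n⟫ • e₂) := by
    have h1 : Continuous (fun n : EuclideanSpace ℝ (Fin d) => ⟪e₁, n⟫) :=
      Continuous.inner continuous_const continuous_id
    have h2 : Continuous (fun n : EuclideanSpace ℝ (Fin d) => ⟪e₂, n⟫) :=
      Continuous.inner continuous_const continuous_id
    exact (continuous_id.sub (h1.smul continuous_const)).sub (h2.smul continuous_const)
  have hangle_meas : Measurable (fun n : EuclideanSpace ℝ (Fin d) =>
      InnerProductGeometry.angle n (n - ⟪e₁, n⟫ • e₁ - ⟪e₂, n⟫ • e₂)) := by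
    unfold InnerProductGeometry.angle
    apply Measurable.comp Real.continuous_arccos.measurable
    apply Measurable.div
    · exact (Continuous.inner continuous_id hF_cont).measurable
    · exact (continuous_norm.mul (continuous_norm.comp hF_cont)).measurable
  have hangle_int : Integrable (fun n : EuclideanSpace ℝ (Fin d) =>
      InnerProductGeometry.angle n (n - ⟪e₁, n⟫ • e₁ - ⟪e₂, n⟫ • e₂)) γ := by
    refine Integrable.mono' (integrable_const Real.pi) hangle_meas.aestronglyMeasurable ?_
    filter_upwards with n
    rw [Real.norm_eq_abs, abs_of_nonneg (InnerProductGeometry.angle_nonneg _ _)]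
    exact InnerProductGeometry.angle_le_pi _ _
  have hInt2 : Integrable (fun n => Real.sqrt (g (b.repr n)) + g (b.repr n)) γ := by
    have hm : Measurable (fun n : EuclideanSpace ℝ (Fin d) => g (b.repr n)) :=
      hg_meas.comp b.repr.continuous.measurable
    refine Integrable.mono' (integrable_const 4) (hm.sqrt.add hm).aestronglyMeasurable ?_
    filter_upwards with n
    rw [Real.norm_eq_abs, abs_of_nonneg (add_nonneg (Real.sqrt_nonneg _) (hg_nonneg _))]
    have h1 : Real.sqrt (g (b.repr n)) ≤ 2 := by
      calc Real.sqrt (g (b.repr n)) ≤ Real.sqrt 2 := Real.sqrt_le_sqrt (hg_le _)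
        _ ≤ 2 := hsqrt2
    linarith [hg_le (b.repr n)]
  have step1 : ∫ n, InnerProductGeometry.angle n (n - ⟪e₁, n⟫ • e₁ - ⟪e₂, n⟫ • e₂) ∂γ
      ≤ ∫ n, (Real.sqrt (g (b.repr n)) + g (b.repr n)) ∂γ :=
    integral_mono_ae hangle_int hInt2 hbd
  have step2 : ∫ n, (Real.sqrt (g (b.repr n)) + g (b.repr n)) ∂γ
      = ∫ y, (Real.sqrt (g y) + g y) ∂γ :=
    integral_stdGaussian_comp b.repr (fun y => Real.sqrt (g y) + g y)
  have step3 : ∫ y, (Real.sqrt (g y) + g y) ∂γ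
      = (∫ y, Real.sqrt (g y) ∂γ) + ∫ y, g y ∂γ := integral_add hsg_int hg_int
  have harc : Real.sqrt (1 / ((d:ℝ) - 1)) ≤ Real.arccos (Real.sqrt (1 - 1 / ((d:ℝ) - 1))) := by
    set ε : ℝ := 1 / ((d:ℝ) - 1) with hε
    have hε0 : 0 < ε := by
      rw [hε]
      apply one_div_pos.mpr
      linarith
    have hε1 : ε ≤ 1 := by
      rw [hε]
      rw [div_le_one (by linarith)]
      linarith
    have hsin : Real.sin (Real.arccos (Real.sqrt (1 - ε))) = Real.sqrt ε := by
      rw [Real.sin_arccos, Real.sq_sqrt (by linarith : (0:ℝ) ≤ 1 - ε)]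
      congr 1
      ring
    calc Real.sqrt ε = Real.sin (Real.arccos (Real.sqrt (1 - ε))) := hsin.symm
      _ ≤ Real.arccos (Real.sqrt (1 - ε)) := Real.sin_le (Real.arccos_nonneg _)
  have hnum := num_ineq hdR
  calc ∫ n, InnerProductGeometry.angle n (n - ⟪e₁, n⟫ • e₁ - ⟪e₂, n⟫ • e₂) ∂γ
      ≤ ∫ n, (Real.sqrt (g (b.repr n)) + g (b.repr n)) ∂γ := step1
    _ = (∫ y, Real.sqrt (g y) ∂γ) + ∫ y, g y ∂γ := by rw [step2, step3]
    _ ≤ Real.sqrt (2 / d) + 2 / d := by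
        rw [hg_val]
        linarith [hsg_le]
    _ < 2 * Real.sqrt (1 / ((d:ℝ) - 1)) := hnum
    _ ≤ 2 * Real.arccos (Real.sqrt (1 - 1 / ((d:ℝ) - 1))) := by linarith [harc]
end

section
/- Let a be a real number with 0 < a ≤ 1/7. Then for every t ∈ [0, 1], arcsin(√t) ≤ arcsin(√a) + (t − a)/(2·√(a·(1 − a))); that is, the tangent line at a to the function g(t) = arccos(√(1 − t)) = arcsin(√t) lies above g on the whole interval [0, 1]. -/
open Real Set

/-- Numeric bound: `cos (√6/2) ≤ √(1/7)`. -/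
private lemma cos_sqrt6_div_two_le : Real.cos (Real.sqrt 6 / 2) ≤ Real.sqrt (1 / 7) := by
  have h6 : (0:ℝ) ≤ 6 := by norm_num
  have hs : Real.sqrt 6 ≤ 5 / 2 := by
    rw [show (5/2:ℝ) = Real.sqrt ((5/2)^2) by rw [Real.sqrt_sq]; norm_num]
    exact Real.sqrt_le_sqrt (by norm_num)
  set x := Real.sqrt 6 / 4 with hxdef
  have hxnn : 0 ≤ x := by positivity
  have hx2 : x ^ 2 = 3 / 8 := by
    rw [hxdef, div_pow, Real.sq_sqrt h6]; norm_num
  have hxabs : |x| ≤ 1 := by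
    rw [abs_of_nonneg hxnn]; nlinarith [Real.sqrt_nonneg 6]
  have hb := Real.cos_bound hxabs
  rw [abs_of_nonneg hxnn] at hb
  have hb' := abs_sub_le_iff.1 hb
  have hcosx : Real.cos x ≤ 1679 / 2048 := by nlinarith [hb'.1]
  have hcosx0 : 0 ≤ Real.cos x := by nlinarith [hb'.2]
  have h2x : Real.sqrt 6 / 2 = 2 * x := by rw [hxdef]; ring
  have hcos2 : Real.cos (Real.sqrt 6 / 2) ≤ 721889 / 2097152 := by
    rw [h2x, Real.cos_two_mul]; nlinarith
  refine hcos2.trans ?_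
  rw [show (721889 / 2097152 : ℝ) = Real.sqrt ((721889/2097152)^2) by
    rw [Real.sqrt_sq]; norm_num]
  exact Real.sqrt_le_sqrt (by norm_num)

/-- `arcsin √(1-a) = π/2 - arcsin √a` for `a ∈ [0,1]`. -/
private lemma arcsin_sqrt_one_sub' {a : ℝ} (h0 : 0 ≤ a) (h1 : a ≤ 1) :
    Real.arcsin (Real.sqrt (1 - a)) = π / 2 - Real.arcsin (Real.sqrt a) := by
  have hc : Real.cos (Real.arcsin (Real.sqrt a)) = Real.sqrt (1 - a) := by
    rw [Real.cos_arcsin, Real.sq_sqrt h0]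
  rw [← hc, ← Real.sin_pi_div_two_sub, Real.arcsin_sin]
  · linarith [Real.pi_pos, Real.arcsin_le_pi_div_two (Real.sqrt a),
      Real.arcsin_nonneg.2 (Real.sqrt_nonneg a)]
  · linarith [Real.pi_pos, Real.arcsin_le_pi_div_two (Real.sqrt a),
      Real.arcsin_nonneg.2 (Real.sqrt_nonneg a)]

/-- `tan y ≥ 2 y` for `arcsin √(6/7) ≤ y < π/2`. -/
private lemma two_mul_le_tan {y : ℝ} (h0 : Real.arcsin (Real.sqrt (6/7)) ≤ y)
    (h1 : y < π / 2) : 2 * y ≤ Real.tan y := by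
  set y₀ := Real.arcsin (Real.sqrt (6/7)) with hy₀def
  have hy₀nn : 0 ≤ y₀ := Real.arcsin_nonneg.2 (Real.sqrt_nonneg _)
  have hsin₀ : Real.sin y₀ = Real.sqrt (6/7) :=
    Real.sin_arcsin (by linarith [Real.sqrt_nonneg (6/7:ℝ)])
      (Real.sqrt_le_one.2 (by norm_num))
  have hcos₀ : Real.cos y₀ = Real.sqrt (1/7) := by
    rw [hy₀def, Real.cos_arcsin, Real.sq_sqrt (by norm_num : (0:ℝ) ≤ 6/7)]; norm_num
  -- cos is positive on [y₀, y]
  have hcpos : ∀ z ∈ Icc y₀ y, 0 < Real.cos z := fun z hz =>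
    Real.cos_pos_of_mem_Ioo ⟨by nlinarith [Real.pi_pos, hz.1], lt_of_le_of_lt hz.2 h1⟩
  -- tan y₀ = √6
  have h17 : Real.sqrt (1/7) > 0 := by positivity
  have htan₀ : Real.tan y₀ = Real.sqrt 6 := by
    rw [Real.tan_eq_sin_div_cos, hsin₀, hcos₀,
      show (6/7 : ℝ) = 6 * (1/7) by norm_num, Real.sqrt_mul (by norm_num : (0:ℝ) ≤ 6)]
    field_simp
  -- 2 y₀ ≤ √6
  have hy₀le : 2 * y₀ ≤ Real.sqrt 6 := by
    have hs6 : (2:ℝ) ≤ Real.sqrt 6 := by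
      rw [show (2:ℝ) = Real.sqrt 4 by rw [show (4:ℝ) = 2^2 by norm_num, Real.sqrt_sq]; norm_num]
      exact Real.sqrt_le_sqrt (by norm_num)
    have hs6' : Real.sqrt 6 ≤ 5/2 := by
      rw [show (5/2:ℝ) = Real.sqrt ((5/2)^2) by rw [Real.sqrt_sq]; norm_num]
      exact Real.sqrt_le_sqrt (by norm_num)
    have hid : y₀ = π / 2 - Real.arcsin (Real.sqrt (1/7)) := by
      rw [hy₀def, show (6/7:ℝ) = 1 - 1/7 by norm_num,
        arcsin_sqrt_one_sub' (by norm_num) (by norm_num)]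
    have harc : π / 2 - Real.sqrt 6 / 2 ≤ Real.arcsin (Real.sqrt (1/7)) := by
      have hmem : π / 2 - Real.sqrt 6 / 2 ∈ Icc (-(π/2)) (π/2) := by
        constructor
        · nlinarith [Real.pi_gt_three]
        · nlinarith [Real.sqrt_nonneg 6]
      have hmem' : Real.sqrt (1/7) ∈ Icc (-1:ℝ) 1 :=
        ⟨by linarith [Real.sqrt_nonneg (1/7:ℝ)], Real.sqrt_le_one.2 (by norm_num)⟩
      rw [Real.le_arcsin_iff_sin_le hmem hmem', Real.sin_pi_div_two_sub]
      exact cos_sqrt6_div_two_le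
    linarith
  -- monotonicity of tan z - 2z on [y₀, y]
  have hder : ∀ z ∈ Icc y₀ y,
      HasDerivAt (fun z => Real.tan z - 2 * z) (1 / Real.cos z ^ 2 - 2) z := by
    intro z hz
    have h2 : HasDerivAt (fun z : ℝ => 2 * z) 2 z := by
      simpa using (hasDerivAt_id z).const_mul (2:ℝ)
    exact (Real.hasDerivAt_tan (ne_of_gt (hcpos z hz))).sub h2
  have hmono : MonotoneOn (fun z => Real.tan z - 2 * z) (Icc y₀ y) := by
    apply monotoneOn_of_deriv_nonneg (convex_Icc _ _)
    · exact fun z hz => ((hder z hz).continuousAt).continuousWithinAt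
    · intro z hz
      rw [interior_Icc] at hz
      exact ((hder z (Ioo_subset_Icc_self hz)).differentiableAt).differentiableWithinAt
    · intro z hz
      rw [interior_Icc] at hz
      rw [(hder z (Ioo_subset_Icc_self hz)).deriv]
      have hc1 : Real.cos z ≤ Real.cos y₀ :=
        Real.cos_le_cos_of_nonneg_of_le_pi hy₀nn (by nlinarith [Real.pi_pos, hz.2.le]) hz.1.le
      have hc2 : 0 < Real.cos z := hcpos z (Ioo_subset_Icc_self hz)
      have hc3 : Real.cos y₀ = Real.sqrt (1/7) := hcos₀
      have hsq : Real.cos z ^ 2 ≤ 1/7 := by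
        have : Real.sqrt (1/7) ^ 2 = 1/7 := Real.sq_sqrt (by norm_num)
        nlinarith
      have h1c : (7:ℝ) ≤ 1 / Real.cos z ^ 2 := by
        rw [le_div_iff₀ (by positivity)]; linarith
      linarith
  have := hmono (left_mem_Icc.2 h0) (right_mem_Icc.2 h0) h0
  simp only at this
  nlinarith [this]

/-- The endpoint inequality `f(1) ≥ 0`. -/
private lemma endpoint_ineq {a : ℝ} (ha : 0 < a) (ha' : a ≤ 1/7) :
    π / 2 ≤ Real.arcsin (Real.sqrt a) + (1 - a) / (2 * Real.sqrt (a * (1 - a))) := by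
  have ha1 : a < 1 := by linarith
  set y := Real.arcsin (Real.sqrt (1 - a)) with hydef
  have hylt : y < π / 2 := Real.arcsin_lt_pi_div_two.2
    ((Real.sqrt_lt' one_pos).2 (by norm_num; linarith))
  have hyge : Real.arcsin (Real.sqrt (6/7)) ≤ y :=
    Real.monotone_arcsin (Real.sqrt_le_sqrt (by linarith))
  have htan := two_mul_le_tan hyge hylt
  have hsiny : Real.sin y = Real.sqrt (1 - a) :=
    Real.sin_arcsin (by linarith [Real.sqrt_nonneg (1 - a)])
      (Real.sqrt_le_one.2 (by linarith))
  have hcosy : Real.cos y = Real.sqrt a := by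
    rw [hydef, Real.cos_arcsin, Real.sq_sqrt (by linarith : (0:ℝ) ≤ 1 - a),
      show 1 - (1 - a) = a by ring]
  have hsa : 0 < Real.sqrt a := Real.sqrt_pos.2 ha
  have hs1a : 0 < Real.sqrt (1 - a) := Real.sqrt_pos.2 (by linarith)
  have hprod : Real.sqrt (a * (1 - a)) = Real.sqrt a * Real.sqrt (1 - a) :=
    Real.sqrt_mul ha.le _
  have hrw : (1 - a) / (2 * Real.sqrt (a * (1 - a))) = Real.tan y / 2 := by
    rw [Real.tan_eq_sin_div_cos, hsiny, hcosy, hprod,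
      show (1 - a) = Real.sqrt (1 - a) ^ 2 from (Real.sq_sqrt (by linarith)).symm]
    field_simp
    ring
    rw [Real.sqrt_sq hs1a.le]
  have hid : Real.arcsin (Real.sqrt a) = π / 2 - y := by
    rw [hydef, arcsin_sqrt_one_sub' ha.le ha1.le]; ring
  rw [hrw, hid]
  linarith

/-- Derivative of `t ↦ arcsin √t` on `(0,1)`. -/
private lemma hasDerivAt_arcsin_sqrt {x : ℝ} (h0 : 0 < x) (h1 : x < 1) :
    HasDerivAt (fun t => Real.arcsin (Real.sqrt t)) (1 / (2 * Real.sqrt (x * (1 - x)))) x := by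
  have hs : HasDerivAt Real.sqrt (1 / (2 * Real.sqrt x)) x := Real.hasDerivAt_sqrt (ne_of_gt h0)
  have hne1 : Real.sqrt x ≠ 1 := by rw [Ne, Real.sqrt_eq_one]; exact ne_of_lt h1
  have hnem1 : Real.sqrt x ≠ -1 := by
    intro h; have := Real.sqrt_nonneg x; rw [h] at this; linarith
  have ha := (Real.hasDerivAt_arcsin hnem1 hne1).comp x hs
  have hsx : 0 < Real.sqrt x := Real.sqrt_pos.2 h0
  have hsx1 : 0 < Real.sqrt (1 - x) := Real.sqrt_pos.2 (by linarith)
  refine ha.congr_deriv ?_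
  rw [Real.sq_sqrt h0.le, Real.sqrt_mul h0.le]
  field_simp

/-- **Tangent-line majorization for `g(t) = arcsin √t`.** For `0 < a ≤ 1/7` and all
`t ∈ [0, 1]`, the tangent line to `g` at `a` lies above `g`:
`arcsin √t ≤ arcsin √a + (t − a)/(2 √(a(1 − a)))`. -/
theorem arcsin_sqrt_tangent_line_bound (a : ℝ) (ha : 0 < a) (ha' : a ≤ 1 / 7)
    (t : ℝ) (ht : t ∈ Set.Icc (0 : ℝ) 1) :
    Real.arcsin (Real.sqrt t)
      ≤ Real.arcsin (Real.sqrt a) + (t - a) / (2 * Real.sqrt (a * (1 - a))) := by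
  have ha1 : a < 1 := by linarith
  set c := 2 * Real.sqrt (a * (1 - a)) with hcdef
  have hcpos : 0 < c := by
    have : 0 < Real.sqrt (a * (1 - a)) := Real.sqrt_pos.2 (by nlinarith)
    linarith
  set F : ℝ → ℝ := fun t => Real.arcsin (Real.sqrt a) + (t - a) / c - Real.arcsin (Real.sqrt t)
    with hFdef
  have hFcont : Continuous F := by
    apply Continuous.sub
    · exact continuous_const.add ((continuous_id.sub continuous_const).div_const c)
    · exact Real.continuous_arcsin.comp Real.continuous_sqrt
  have hFderiv : ∀ x ∈ Ioo (0:ℝ) 1,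
      HasDerivAt F (1 / c - 1 / (2 * Real.sqrt (x * (1 - x)))) x := by
    intro x hx
    have h1 : HasDerivAt (fun t : ℝ => Real.arcsin (Real.sqrt a) + (t - a) / c) (1 / c) x := by
      have := ((hasDerivAt_id x).sub_const a).div_const c
      simpa using this.const_add (Real.arcsin (Real.sqrt a))
    exact h1.sub (hasDerivAt_arcsin_sqrt hx.1 hx.2)
  have hFa : F a = 0 := by simp [hFdef]
  -- comparison of derivative signs
  have hcomp_le : ∀ x ∈ Ioo (0:ℝ) 1, x * (1 - x) ≤ a * (1 - a) →
      1 / c - 1 / (2 * Real.sqrt (x * (1 - x))) ≤ 0 := by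
    intro x hx hle
    have hxp : 0 < Real.sqrt (x * (1 - x)) := Real.sqrt_pos.2 (by nlinarith [hx.1, hx.2])
    have hmono : Real.sqrt (x * (1 - x)) ≤ Real.sqrt (a * (1 - a)) := Real.sqrt_le_sqrt hle
    have : 1 / c ≤ 1 / (2 * Real.sqrt (x * (1 - x))) := by
      apply one_div_le_one_div_of_le (by linarith) (by rw [hcdef]; linarith)
    linarith
  have hcomp_ge : ∀ x ∈ Ioo (0:ℝ) 1, a * (1 - a) ≤ x * (1 - x) →
      0 ≤ 1 / c - 1 / (2 * Real.sqrt (x * (1 - x))) := by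
    intro x hx hle
    have hap : 0 < Real.sqrt (a * (1 - a)) := Real.sqrt_pos.2 (by nlinarith)
    have hmono : Real.sqrt (a * (1 - a)) ≤ Real.sqrt (x * (1 - x)) := Real.sqrt_le_sqrt hle
    have : 1 / (2 * Real.sqrt (x * (1 - x))) ≤ 1 / c := by
      apply one_div_le_one_div_of_le (by rw [hcdef]; linarith) (by rw [hcdef]; linarith)
    linarith
  have key : 0 ≤ F t := by
    rcases le_or_gt t a with h | h
    · -- antitone on [0, a]
      have hanti : AntitoneOn F (Icc (0:ℝ) a) := by
        apply antitoneOn_of_deriv_nonpos (convex_Icc _ _) hFcont.continuousOn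
        · intro x hx
          rw [interior_Icc] at hx
          have hx' : x ∈ Ioo (0:ℝ) 1 := ⟨hx.1, by linarith [hx.2]⟩
          exact ((hFderiv x hx').differentiableAt).differentiableWithinAt
        · intro x hx
          rw [interior_Icc] at hx
          have hx' : x ∈ Ioo (0:ℝ) 1 := ⟨hx.1, by linarith [hx.2]⟩
          rw [(hFderiv x hx').deriv]
          exact hcomp_le x hx' (by nlinarith [hx.1, hx.2])
      have := hanti ⟨ht.1, h⟩ ⟨ha.le, le_rfl⟩ h
      rw [hFa] at this; exact this
    · rcases le_or_gt t (1 - a) with h2 | h2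
      · -- monotone on [a, 1-a]
        have hmono : MonotoneOn F (Icc a (1 - a)) := by
          apply monotoneOn_of_deriv_nonneg (convex_Icc _ _) hFcont.continuousOn
          · intro x hx
            rw [interior_Icc] at hx
            have hx' : x ∈ Ioo (0:ℝ) 1 := ⟨lt_trans ha hx.1, by linarith [hx.2]⟩
            exact ((hFderiv x hx').differentiableAt).differentiableWithinAt
          · intro x hx
            rw [interior_Icc] at hx
            have hx' : x ∈ Ioo (0:ℝ) 1 := ⟨lt_trans ha hx.1, by linarith [hx.2]⟩
            rw [(hFderiv x hx').deriv]
            exact hcomp_ge x hx' (by nlinarith [hx.1, hx.2])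
        have := hmono ⟨le_rfl, by linarith⟩ ⟨h.le, h2⟩ h.le
        rw [hFa] at this; exact this
      · -- antitone on [1-a, 1]
        have hanti : AntitoneOn F (Icc (1 - a) 1) := by
          apply antitoneOn_of_deriv_nonpos (convex_Icc _ _) hFcont.continuousOn
          · intro x hx
            rw [interior_Icc] at hx
            have hx' : x ∈ Ioo (0:ℝ) 1 := ⟨by linarith [hx.1], hx.2⟩
            exact ((hFderiv x hx').differentiableAt).differentiableWithinAt
          · intro x hx
            rw [interior_Icc] at hx
            have hx' : x ∈ Ioo (0:ℝ) 1 := ⟨by linarith [hx.1], hx.2⟩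
            rw [(hFderiv x hx').deriv]
            exact hcomp_le x hx' (by nlinarith [hx.1, hx.2])
        have hF1 : 0 ≤ F 1 := by
          have := endpoint_ineq ha ha'
          simp only [hFdef, Real.sqrt_one, Real.arcsin_one]
          rw [hcdef] at *
          linarith
        have := hanti ⟨h2.le, ht.2⟩ ⟨by linarith, le_rfl⟩ ht.2
        linarith
  simp only [hFdef] at key
  linarith
end
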